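/- arXiv:1701.06400 — 2 statements merged into one kernel-verified Lean document; each statement's English description precedes it below -/
import Mathlib

section
/- Let G be a starlike tree. Then the second largest adjacency eigenvalue of the line graph L(G) is strictly less than 2. -/
open Polynomial

instance lineGraphAdjDecidable {V : Type*} (G : SimpleGraph V) [Fintype V] [DecidableEq V]
    [DecidableRel G.Adj] : DecidableRel G.lineGraph.Adj :=
  fun _ _ => decidable_of_iff _ SimpleGraph.lineGraph_adj_iff_exists.symm

open Polynomial Matrix Finset

section LinAlg

variable {n : Type*} [Fintype n] [DecidableEq n]

lemma my_charpoly_conj (U D V : Matrix n n ℝ) (hUV : U * V = 1) (hVU : V * U = 1) :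
    (U * D * V).charpoly = D.charpoly := by
  have hscal : (U.map (C : ℝ →+* ℝ[X])) * Matrix.scalar n (X : ℝ[X]) * (V.map C)
      = Matrix.scalar n (X : ℝ[X]) := by
    rw [(Matrix.scalar_commute (X : ℝ[X]) (fun r => Commute.all _ _) (U.map C)).symm.eq,
      mul_assoc, ← Matrix.map_mul, hUV, Matrix.map_one _ (map_zero C) (map_one C), mul_one]
  have key : charmatrix (U * D * V) = (U.map (C : ℝ →+* ℝ[X])) * charmatrix D * (V.map C) := by
    rw [charmatrix, charmatrix]
    simp only [RingHom.mapMatrix_apply]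
    rw [mul_sub, sub_mul, Matrix.map_mul, Matrix.map_mul, hscal]
  have hdet1 : (U.map (C : ℝ →+* ℝ[X])).det * (V.map C).det = 1 := by
    rw [← det_mul, ← Matrix.map_mul, hUV, Matrix.map_one _ (map_zero C) (map_one C), det_one]
  rw [Matrix.charpoly, Matrix.charpoly, key, det_mul, det_mul]
  ring_nf
  rw [mul_comm, ← mul_assoc]
  nth_rewrite 2 [mul_comm]
  rw [hdet1, one_mul]

lemma my_charpoly_diagonal (d : n → ℝ) :
    (diagonal d).charpoly = ∏ i, (X - C (d i)) := by
  have : charmatrix (diagonal d) = diagonal (fun i => (X : ℝ[X]) - C (d i)) := by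
    refine Matrix.ext fun i j => ?_
    by_cases h : i = j
    · subst h; simp
    · rw [charmatrix_apply_ne _ _ _ h, diagonal_apply_ne _ h, diagonal_apply_ne _ h, neg_eq_zero,
        map_zero]
  rw [Matrix.charpoly, this, det_diagonal]

lemma my_herm_charpoly (A : Matrix n n ℝ) (hA : A.IsHermitian) :
    A.charpoly = ∏ i, (X - C (hA.eigenvalues i)) := by
  conv_lhs => rw [hA.spectral_theorem, Unitary.conjStarAlgAut_apply]
  rw [my_charpoly_conj _ _ _
    (by simpa using (Matrix.mem_unitaryGroup_iff.mp hA.eigenvectorUnitary.2))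
    (by simpa using (Matrix.mem_unitaryGroup_iff'.mp hA.eigenvectorUnitary.2))]
  have : (RCLike.ofReal ∘ hA.eigenvalues : n → ℝ) = hA.eigenvalues := by
    funext i; simp
  rw [this, my_charpoly_diagonal]

lemma my_herm_roots (A : Matrix n n ℝ) (hA : A.IsHermitian) :
    A.charpoly.roots = Multiset.map hA.eigenvalues Finset.univ.val := by
  rw [my_herm_charpoly A hA, Finset.prod_eq_multiset_prod,
    show (fun i => X - C (hA.eigenvalues i)) = ((fun a => X - C a) ∘ hA.eigenvalues) from rfl,
    ← Multiset.map_map, roots_multiset_prod_X_sub_C]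

end LinAlg

section KeyLA
variable {n : Type*} [Fintype n] [DecidableEq n]

lemma keyLA (M : Matrix n n ℝ) (hM : M.IsHermitian)
    (φ : (n → ℝ) →ₗ[ℝ] ℝ)
    (h : ∀ x : n → ℝ, φ x = 0 → x ≠ 0 → x ⬝ᵥ (M *ᵥ x) < 2 * (x ⬝ᵥ x)) :
    ((M.charpoly.roots).filter (fun μ => 2 ≤ μ)).card ≤ 1 := by
  have hdot : ∀ i j, (⇑(hM.eigenvectorBasis i) ⬝ᵥ ⇑(hM.eigenvectorBasis j) : ℝ) =
      if i = j then 1 else 0 := by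
    have horth := hM.eigenvectorBasis.orthonormal
    rw [orthonormal_iff_ite] at horth
    intro i j
    rw [← horth i j]
    simp [PiLp.inner_apply, RCLike.inner_apply, dotProduct, mul_comm]
  have hMu : ∀ i, M *ᵥ ⇑(hM.eigenvectorBasis i) = hM.eigenvalues i • ⇑(hM.eigenvectorBasis i) :=
    hM.mulVec_eigenvectorBasis
  rw [my_herm_roots M hM, Multiset.filter_map, Multiset.card_map]
  have hval : Multiset.filter ((fun μ => 2 ≤ μ) ∘ hM.eigenvalues) Finset.univ.val
      = (Finset.univ.filter fun i => 2 ≤ hM.eigenvalues i).val := rfl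
  rw [hval]
  show (Finset.univ.filter fun i => 2 ≤ hM.eigenvalues i).card ≤ 1
  by_contra hc
  push_neg at hc
  obtain ⟨a, ha, b, hb, hab⟩ := Finset.one_lt_card.mp hc
  rw [Finset.mem_filter] at ha hb
  set u : n → ℝ := ⇑(hM.eigenvectorBasis a) with hu
  set w : n → ℝ := ⇑(hM.eigenvectorBasis b) with hw
  have huu : u ⬝ᵥ u = 1 := by rw [hdot a a]; simp
  have hww : w ⬝ᵥ w = 1 := by rw [hdot b b]; simp
  have huw : u ⬝ᵥ w = 0 := by rw [hdot a b]; simp [hab]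
  have hwu : w ⬝ᵥ u = 0 := by rw [hdot b a]; simp [hab.symm]
  by_cases hz : φ u = 0 ∧ φ w = 0
  · have hune : u ≠ 0 := by
      intro h0
      rw [h0] at huu; simp at huu
    have := h u hz.1 hune
    rw [hMu a, dotProduct_smul, smul_eq_mul, huu] at this
    nlinarith [ha.2]
  · set v : n → ℝ := (φ w) • u - (φ u) • w with hv
    have hφv : φ v = 0 := by
      rw [hv]
      simp only [map_sub, LinearMap.map_smul, smul_eq_mul]
      ring
    have hvne : v ≠ 0 := by
      intro h0
      have h1 : v ⬝ᵥ u = φ w := by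
        rw [hv, sub_dotProduct, smul_dotProduct, smul_dotProduct, huu, hwu, smul_eq_mul,
          smul_eq_mul]
        ring
      have h2 : v ⬝ᵥ w = -(φ u) := by
        rw [hv, sub_dotProduct, smul_dotProduct, smul_dotProduct, huw, hww, smul_eq_mul,
          smul_eq_mul]
        ring
      rw [h0, zero_dotProduct] at h1 h2
      exact hz ⟨by linarith [h2], h1.symm⟩
    have hform : v ⬝ᵥ (M *ᵥ v) = (φ w)^2 * hM.eigenvalues a + (φ u)^2 * hM.eigenvalues b := by
      rw [hv, Matrix.mulVec_sub, Matrix.mulVec_smul, Matrix.mulVec_smul, hMu a, hMu b]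
      simp only [sub_dotProduct, dotProduct_sub, smul_dotProduct, dotProduct_smul, smul_eq_mul,
        ← hu, ← hw, huu, hww, huw, hwu]
      ring
    have hnorm : v ⬝ᵥ v = (φ w)^2 + (φ u)^2 := by
      rw [hv]
      simp only [sub_dotProduct, dotProduct_sub, smul_dotProduct, dotProduct_smul, smul_eq_mul,
        huu, hww, huw, hwu]
      ring
    have := h v hφv hvne
    rw [hform, hnorm] at this
    nlinarith [ha.2, hb.2, sq_nonneg (φ u), sq_nonneg (φ w)]
end KeyLA

def lineGraphAdjDecidable' {V : Type*} (G : SimpleGraph V) [Fintype V] [DecidableEq V]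
    [DecidableRel G.Adj] : DecidableRel G.lineGraph.Adj :=
  fun _ _ => decidable_of_iff _ SimpleGraph.lineGraph_adj_iff_exists.symm

section Graph
variable {V : Type*} [Fintype V] [DecidableEq V] {G : SimpleGraph V} [DecidableRel G.Adj]

/-- edges incident to a vertex, as a finset of `G.edgeSet` -/
def myInc (G : SimpleGraph V) [DecidableRel G.Adj] (v : V) : Finset G.edgeSet :=
  Finset.univ.filter (fun e : G.edgeSet => v ∈ (e : Sym2 V))

lemma mem_myInc {v : V} {e : G.edgeSet} : e ∈ myInc G v ↔ v ∈ (e : Sym2 V) := by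
  simp [myInc]

lemma myInc_def (v : V) :
    myInc G v = Finset.univ.filter (fun e : G.edgeSet => v ∈ (e : Sym2 V)) := rfl

lemma card_filter_mem (e : G.edgeSet) :
    (Finset.univ.filter fun v : V => v ∈ (e : Sym2 V)).card = 2 := by
  obtain ⟨e, he⟩ := e
  induction e with
  | _ a b =>
    have hab : a ≠ b := G.ne_of_adj he
    have h : (Finset.univ.filter fun v : V => v ∈ (s(a, b) : Sym2 V)) = {a, b} := by
      ext v; simp [Sym2.mem_iff]
    rw [h, Finset.card_pair hab]

lemma card_filter_mem_pair (e f : G.edgeSet) :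
    (((Finset.univ.filter fun v : V => v ∈ (e : Sym2 V) ∧ v ∈ (f : Sym2 V)).card : ℕ) : ℝ)
      = (if G.lineGraph.Adj e f then 1 else 0) + (if e = f then 2 else 0) := by
  by_cases hef : e = f
  · subst hef
    rw [if_neg (G.lineGraph.irrefl), if_pos rfl]
    have h : (Finset.univ.filter fun v : V => v ∈ (e : Sym2 V) ∧ v ∈ (e : Sym2 V))
        = Finset.univ.filter fun v : V => v ∈ (e : Sym2 V) := by
      ext v; simp
    rw [h, card_filter_mem]
    norm_num
  · rw [if_neg hef, add_zero]
    by_cases hadj : G.lineGraph.Adj e f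
    · rw [if_pos hadj]
      obtain ⟨hne, v0, hv0e, hv0f⟩ := SimpleGraph.lineGraph_adj_iff_exists.mp hadj
      have h : (Finset.univ.filter fun v : V => v ∈ (e : Sym2 V) ∧ v ∈ (f : Sym2 V)) = {v0} := by
        ext w
        simp only [Finset.mem_filter, Finset.mem_univ, true_and, Finset.mem_singleton]
        constructor
        · rintro ⟨hwe, hwf⟩
          by_contra hwv
          have h1 := (Sym2.mem_and_mem_iff hwv).mp ⟨hwe, hv0e⟩
          have h2 := (Sym2.mem_and_mem_iff hwv).mp ⟨hwf, hv0f⟩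
          exact hef (Subtype.ext (h1.trans h2.symm))
        · rintro rfl; exact ⟨hv0e, hv0f⟩
      rw [h]; simp
    · rw [if_neg hadj]
      have h : (Finset.univ.filter fun v : V => v ∈ (e : Sym2 V) ∧ v ∈ (f : Sym2 V)) = ∅ := by
        ext w
        simp only [Finset.mem_filter, Finset.mem_univ, true_and, Finset.notMem_empty,
          iff_false, not_and]
        intro hwe hwf
        exact hadj (SimpleGraph.lineGraph_adj_iff_exists.mpr ⟨hef, ⟨w, hwe, hwf⟩⟩)
      rw [h]; simp

lemma card_myInc_eq_degree (v : V) : (myInc G v).card = G.degree v := by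
  rw [← SimpleGraph.card_neighborFinset_eq_degree]
  refine Finset.card_bij' (fun e he => Sym2.Mem.other' (mem_myInc.mp he))
    (fun w hw => (⟨s(v, w), G.mem_edgeSet.mpr ((G.mem_neighborFinset v w).mp hw)⟩ : G.edgeSet))
    ?_ ?_ ?_ ?_
  · intro e he
    rw [SimpleGraph.mem_neighborFinset, ← SimpleGraph.mem_edgeSet,
      Sym2.other_spec' (mem_myInc.mp he)]
    exact e.2
  · intro w hw
    rw [mem_myInc]
    simp
  · intro e he
    exact Subtype.ext (Sym2.other_spec' (mem_myInc.mp he))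
  · intro w hw
    exact Sym2.congr_right.mp (Sym2.other_spec' (by simp : v ∈ s(v, w)))

lemma quad_id (x : G.edgeSet → ℝ) :
    ∑ v : V, (∑ e ∈ myInc G v, x e) ^ 2
      = x ⬝ᵥ ((G.lineGraph.adjMatrix ℝ) *ᵥ x) + 2 * (x ⬝ᵥ x) := by
  have lhs_eq : ∀ v : V, (∑ e ∈ myInc G v, x e) ^ 2
      = ∑ e : G.edgeSet, ∑ f : G.edgeSet,
          (if v ∈ (e : Sym2 V) ∧ v ∈ (f : Sym2 V) then x e * x f else 0) := by
    intro v
    have hpt : ∀ (e f : G.edgeSet), (if v ∈ (e : Sym2 V) ∧ v ∈ (f : Sym2 V) then x e * x f else 0)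
        = (if v ∈ (e : Sym2 V) then x e else 0) * (if v ∈ (f : Sym2 V) then x f else 0) :=
      fun e f => by rw [ite_zero_mul_ite_zero]
    simp only [hpt]
    rw [← Finset.sum_mul_sum, myInc, Finset.sum_filter, sq]
  calc ∑ v : V, (∑ e ∈ myInc G v, x e) ^ 2
      = ∑ v : V, ∑ e : G.edgeSet, ∑ f : G.edgeSet,
          (if v ∈ (e : Sym2 V) ∧ v ∈ (f : Sym2 V) then x e * x f else 0) := by
        exact Finset.sum_congr rfl fun v _ => lhs_eq v
    _ = ∑ e : G.edgeSet, ∑ f : G.edgeSet, ∑ v : V,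
          (if v ∈ (e : Sym2 V) ∧ v ∈ (f : Sym2 V) then x e * x f else 0) := by
        rw [Finset.sum_comm]
        exact Finset.sum_congr rfl fun e _ => Finset.sum_comm
    _ = ∑ e : G.edgeSet, ∑ f : G.edgeSet,
          (((Finset.univ.filter fun v : V => v ∈ (e : Sym2 V) ∧ v ∈ (f : Sym2 V)).card : ℝ)
            * (x e * x f)) := by
        refine Finset.sum_congr rfl fun e _ => Finset.sum_congr rfl fun f _ => ?_
        rw [← Finset.sum_filter, Finset.sum_const, nsmul_eq_mul]
    _ = ∑ e : G.edgeSet, ∑ f : G.edgeSet,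
          (((if G.lineGraph.Adj e f then (1:ℝ) else 0) + (if e = f then 2 else 0))
            * (x e * x f)) := by
        refine Finset.sum_congr rfl fun e _ => Finset.sum_congr rfl fun f _ => ?_
        rw [card_filter_mem_pair]
    _ = x ⬝ᵥ ((G.lineGraph.adjMatrix ℝ) *ᵥ x) + 2 * (x ⬝ᵥ x) := by
        simp only [add_mul, Finset.sum_add_distrib]
        congr 1
        · rw [dotProduct]
          refine Finset.sum_congr rfl fun e _ => ?_
          rw [SimpleGraph.adjMatrix_mulVec_apply, Finset.mul_sum]
          have hnb : G.lineGraph.neighborFinset e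
              = Finset.univ.filter fun f => G.lineGraph.Adj e f := by
            ext f; simp [SimpleGraph.mem_neighborFinset]
          rw [hnb, Finset.sum_filter]
          refine Finset.sum_congr rfl fun f _ => ?_
          by_cases h : G.lineGraph.Adj e f <;> simp [h] <;> ring
        · rw [dotProduct, Finset.mul_sum]
          rw [Finset.sum_comm]
          refine Finset.sum_congr rfl fun e _ => ?_
          simp only [ite_mul, zero_mul]
          rw [Finset.sum_ite_eq' Finset.univ e (fun f => 2 * (x f * x e))]
          simp [mul_comm, mul_assoc]
end Graph

section Tree
variable {V : Type*} {G : SimpleGraph V} [DecidableEq V]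

/-- In a tree, adjacent vertices have different distances from any fixed vertex. -/
lemma my_dist_ne_of_adj (ht : G.IsTree) {u v : V} (h : G.Adj u v) (c : V) :
    G.dist c u ≠ G.dist c v := by
  intro hd
  obtain ⟨p, hp, hlp⟩ := ht.isConnected.exists_path_of_dist c v
  by_cases hus : u ∈ p.support
  · -- prefix of p gives a strictly shorter walk to u
    have h1 : G.dist c u ≤ (p.takeUntil u hus).length := SimpleGraph.dist_le _
    have h2 : (p.takeUntil u hus).length + (p.dropUntil u hus).length = p.length := by
      rw [← SimpleGraph.Walk.length_append, SimpleGraph.Walk.take_spec]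
    have h3 : (p.dropUntil u hus).length ≠ 0 := by
      intro h0
      exact (G.ne_of_adj h) (SimpleGraph.Walk.eq_of_length_eq_zero h0)
    omega
  · obtain ⟨q, hq, hlq⟩ := ht.isConnected.exists_path_of_dist c u
    have hR1 : (SimpleGraph.Walk.cons h p.reverse).IsPath := by
      refine hp.reverse.cons ?_
      rwa [SimpleGraph.Walk.support_reverse, List.mem_reverse]
    have huniq := (SimpleGraph.isAcyclic_iff_path_unique.mp ht.IsAcyclic)
      ⟨SimpleGraph.Walk.cons h p.reverse, hR1⟩ ⟨q.reverse, hq.reverse⟩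
    have := congrArg (fun r : G.Path u c => (r : G.Walk u c).length) huniq
    simp only [SimpleGraph.Walk.length_cons, SimpleGraph.Walk.length_reverse] at this
    omega

/-- In a tree, a vertex cannot have two distinct neighbors both closer to `c`. -/
lemma my_no_two_parents (ht : G.IsTree) {c v u w : V} (hu : G.Adj v u) (hw : G.Adj v w)
    (huw : u ≠ w) (hdu : G.dist c u < G.dist c v) (hdw : G.dist c w < G.dist c v) : False := by
  obtain ⟨pu, hpu, hlu⟩ := ht.isConnected.exists_path_of_dist c u
  obtain ⟨pw, hpw, hlw⟩ := ht.isConnected.exists_path_of_dist c w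
  have hvsu : v ∉ pu.support := by
    intro hv
    have h1 : G.dist c v ≤ (pu.takeUntil v hv).length := SimpleGraph.dist_le _
    have h2 := SimpleGraph.Walk.length_takeUntil_le pu hv
    omega
  have hvsw : v ∉ pw.support := by
    intro hv
    have h1 : G.dist c v ≤ (pw.takeUntil v hv).length := SimpleGraph.dist_le _
    have h2 := SimpleGraph.Walk.length_takeUntil_le pw hv
    omega
  have hR1 : (SimpleGraph.Walk.cons hu pu.reverse).IsPath := by
    refine hpu.reverse.cons ?_
    rwa [SimpleGraph.Walk.support_reverse, List.mem_reverse]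
  have hR2 : (SimpleGraph.Walk.cons hw pw.reverse).IsPath := by
    refine hpw.reverse.cons ?_
    rwa [SimpleGraph.Walk.support_reverse, List.mem_reverse]
  have huniq := (SimpleGraph.isAcyclic_iff_path_unique.mp ht.IsAcyclic)
    ⟨SimpleGraph.Walk.cons hu pu.reverse, hR1⟩ ⟨SimpleGraph.Walk.cons hw pw.reverse, hR2⟩
  have hwalk : SimpleGraph.Walk.cons hu pu.reverse = SimpleGraph.Walk.cons hw pw.reverse :=
    congrArg Subtype.val huniq
  have := congrArg (fun r : G.Walk v c => r.getVert 1) hwalk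
  simp only [SimpleGraph.Walk.getVert_cons _ _ one_ne_zero, Nat.sub_self, SimpleGraph.Walk.getVert_zero] at this
  exact huw this

lemma my_dist_le_succ (ht : G.IsTree) {c u v : V} (h : G.Adj u v) :
    G.dist c v ≤ G.dist c u + 1 := by
  obtain ⟨p, _, hl⟩ := ht.isConnected.exists_path_of_dist c u
  have := SimpleGraph.dist_le (p.concat h)
  rwa [SimpleGraph.Walk.length_concat, hl] at this

/-- In a tree, if `u` is the parent of `v` then any other neighbor `w` of `v` is further. -/
lemma my_child_far (ht : G.IsTree) {c v u w : V} (hu : G.Adj v u) (hw : G.Adj v w)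
    (huw : u ≠ w) (hdu : G.dist c u < G.dist c v) : G.dist c v < G.dist c w := by
  have h1 : G.dist c v ≠ G.dist c w := my_dist_ne_of_adj ht hw c
  rcases lt_or_gt_of_ne h1 with h | h
  · exact h
  · exact absurd h (by intro h'; exact my_no_two_parents ht hu hw huw hdu h')
end Tree


section Main
variable {V : Type*} [Fintype V] [DecidableEq V] {G : SimpleGraph V} [DecidableRel G.Adj]

lemma my_vertex_le (x : G.edgeSet → ℝ) (s : Finset G.edgeSet) (hs : s.card ≤ 2) :
    (∑ e ∈ s, x e) ^ 2 ≤ 2 * ∑ e ∈ s, (x e) ^ 2 := by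
  rcases (by omega : s.card = 0 ∨ s.card = 1 ∨ s.card = 2) with h | h | h
  · rw [Finset.card_eq_zero.mp h]; simp
  · obtain ⟨e, rfl⟩ := Finset.card_eq_one.mp h
    simp only [Finset.sum_singleton]
    nlinarith [sq_nonneg (x e)]
  · obtain ⟨a, b, hab, rfl⟩ := Finset.card_eq_two.mp h
    rw [Finset.sum_pair hab, Finset.sum_pair hab]
    nlinarith [sq_nonneg (x a - x b)]

lemma my_vertex_eqs (x : G.edgeSet → ℝ) (s : Finset G.edgeSet) (hs : s.card ≤ 2)
    (he : (∑ e ∈ s, x e) ^ 2 = 2 * ∑ e ∈ s, (x e) ^ 2) :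
    (∀ e ∈ s, s.card = 1 → x e = 0) ∧ (∀ e ∈ s, ∀ f ∈ s, e ≠ f → x e = x f) := by
  rcases (by omega : s.card = 0 ∨ s.card = 1 ∨ s.card = 2) with h | h | h
  · rw [Finset.card_eq_zero.mp h]
    exact ⟨fun e hee => by simp at hee, fun e hee => by simp at hee⟩
  · obtain ⟨e0, rfl⟩ := Finset.card_eq_one.mp h
    simp only [Finset.sum_singleton] at he
    constructor
    · intro e hee _
      rw [Finset.mem_singleton] at hee
      subst hee
      nlinarith
    · intro e hee f hf hef
      rw [Finset.mem_singleton] at hee hf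
      exact absurd (hee.trans hf.symm) hef
  · obtain ⟨a, b, hab, rfl⟩ := Finset.card_eq_two.mp h
    rw [Finset.sum_pair hab, Finset.sum_pair hab] at he
    have hsub : x a = x b := by nlinarith [sq_nonneg (x a - x b)]
    constructor
    · intro e hee hc1
      rw [Finset.card_pair hab] at hc1
      omega
    · intro e hee f hf hef
      rw [Finset.mem_insert, Finset.mem_singleton] at hee hf
      rcases hee with rfl | rfl <;> rcases hf with rfl | rfl
      · exact absurd rfl hef
      · exact hsub
      · exact hsub.symm
      · exact absurd rfl hef

lemma my_zero_of_conditions (ht : G.IsTree) (c : V)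
    (hdeg : ∀ v : V, v ≠ c → G.degree v ≤ 2) (x : G.edgeSet → ℝ)
    (hC1 : ∀ v : V, v ≠ c → ∀ e ∈ myInc G v, (myInc G v).card = 1 → x e = 0)
    (hC2 : ∀ v : V, v ≠ c → ∀ e ∈ myInc G v, ∀ f ∈ myInc G v, e ≠ f → x e = x f) :
    ∀ e : G.edgeSet, x e = 0 := by
  have key : ∀ (k : ℕ) (u v : V) (huv : G.Adj u v), G.dist c u < G.dist c v →
      Fintype.card V ≤ G.dist c v + k → x ⟨s(u, v), huv⟩ = 0 := by
    intro k
    induction k with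
    | zero =>
      intro u v huv hlt hcard
      exfalso
      obtain ⟨p, hp, hl⟩ := ht.isConnected.exists_path_of_dist c v
      have := hp.length_lt
      omega
    | succ k ih =>
      intro u v huv hlt hcard
      set e : G.edgeSet := ⟨s(u, v), huv⟩ with he
      have hvc : v ≠ c := by
        rintro rfl
        rw [SimpleGraph.dist_self] at hlt
        omega
      have hve : e ∈ myInc G v := by
        rw [mem_myInc]
        exact Sym2.mem_mk_right u v
      have hcle : (myInc G v).card ≤ 2 := by
        rw [card_myInc_eq_degree]; exact hdeg v hvc
      have hpos : 1 ≤ (myInc G v).card := Finset.card_pos.mpr ⟨e, hve⟩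
      rcases (by omega : (myInc G v).card = 1 ∨ (myInc G v).card = 2) with h1 | h2
      · exact hC1 v hvc e hve h1
      · obtain ⟨a, b, hab, hs⟩ := Finset.card_eq_two.mp h2
        have hmem : e = a ∨ e = b := by rw [hs] at hve; simpa using hve
        obtain ⟨f, hf, hfe⟩ : ∃ f, f ∈ myInc G v ∧ f ≠ e := by
          rcases hmem with rfl | rfl
          · exact ⟨b, by rw [hs]; simp, Ne.symm hab⟩
          · exact ⟨a, by rw [hs]; simp, hab⟩
        have hvf : v ∈ (f : Sym2 V) := mem_myInc.mp hf
        obtain ⟨w, hw⟩ : ∃ w, (f : Sym2 V) = s(v, w) :=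
          ⟨Sym2.Mem.other' hvf, (Sym2.other_spec' hvf).symm⟩
        have hadjvw : G.Adj v w := G.mem_edgeSet.mp (hw ▸ f.2)
        have hwu : w ≠ u := by
          rintro rfl
          apply hfe
          apply Subtype.ext
          rw [hw]
          exact Sym2.eq_swap
        have hdw : G.dist c v < G.dist c w :=
          my_child_far ht huv.symm hadjvw hwu.symm hlt
        have hcard' : Fintype.card V ≤ G.dist c w + k := by omega
        have hxf : x ⟨s(v, w), hadjvw⟩ = 0 := ih v w hadjvw hdw hcard'
        have hfeq : f = ⟨s(v, w), hadjvw⟩ := Subtype.ext hw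
        rw [hC2 v hvc e hve f hf (Ne.symm hfe), hfeq, hxf]
  intro e
  obtain ⟨es, hes⟩ := e
  revert hes
  induction es using Sym2.ind with
  | _ a b =>
    intro hes
    have hadj : G.Adj a b := hes
    have hne := my_dist_ne_of_adj ht hadj c
    rcases lt_or_gt_of_ne hne with h | h
    · exact key (Fintype.card V) a b hadj h (by omega)
    · have heq : (⟨s(a, b), hes⟩ : G.edgeSet) = ⟨s(b, a), Sym2.eq_swap ▸ hes⟩ :=
        Subtype.ext Sym2.eq_swap
      rw [heq]
      exact key (Fintype.card V) b a hadj.symm h (by omega)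

lemma my_main_strict (ht : G.IsTree) (c : V)
    (hdeg : ∀ v : V, v ≠ c → G.degree v ≤ 2) (x : G.edgeSet → ℝ)
    (hφ : ∑ e ∈ myInc G c, x e = 0) (hx : x ≠ 0) :
    x ⬝ᵥ ((G.lineGraph.adjMatrix ℝ) *ᵥ x) < 2 * (x ⬝ᵥ x) := by
  obtain ⟨S, hS⟩ : ∃ S : V → ℝ, ∀ v, S v = ∑ e ∈ myInc G v, x e := ⟨_, fun _ => rfl⟩
  obtain ⟨T, hT⟩ : ∃ T : V → ℝ, ∀ v, T v = ∑ e ∈ myInc G v, (x e) ^ 2 := ⟨_, fun _ => rfl⟩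
  obtain ⟨g, hg⟩ : ∃ g : V → ℝ, ∀ v, g v = if v = c then 0 else 2 * T v := ⟨_, fun _ => rfl⟩
  have hxx : x ⬝ᵥ x = ∑ e : G.edgeSet, (x e) ^ 2 := by
    rw [dotProduct]; exact Finset.sum_congr rfl fun e _ => (sq (x e)).symm
  have h2T : ∑ v : V, T v = 2 * ∑ e : G.edgeSet, (x e) ^ 2 := by
    calc ∑ v : V, T v
        = ∑ v : V, ∑ e : G.edgeSet, (if v ∈ (e : Sym2 V) then (x e) ^ 2 else 0) := by
          refine Finset.sum_congr rfl fun v _ => ?_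
          rw [hT v, myInc_def, Finset.sum_filter]
      _ = ∑ e : G.edgeSet, ∑ v : V, (if v ∈ (e : Sym2 V) then (x e) ^ 2 else 0) :=
          Finset.sum_comm
      _ = ∑ e : G.edgeSet, 2 * (x e) ^ 2 := by
          refine Finset.sum_congr rfl fun e _ => ?_
          rw [← Finset.sum_filter, Finset.sum_const, nsmul_eq_mul, card_filter_mem]
          norm_num
      _ = 2 * ∑ e : G.edgeSet, (x e) ^ 2 := by rw [Finset.mul_sum]
  have hcardle : ∀ v : V, v ≠ c → (myInc G v).card ≤ 2 := by
    intro v hv; rw [card_myInc_eq_degree]; exact hdeg v hv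
  have hpw : ∀ v : V, (S v) ^ 2 ≤ g v := by
    intro v
    rw [hg v, hS v]
    by_cases hv : v = c
    · subst hv
      simp only [if_pos rfl, hφ]
      norm_num
    · rw [if_neg hv, hT v]
      exact my_vertex_le x _ (hcardle v hv)
  have hTnonneg : ∀ v, 0 ≤ T v := fun v => by
    rw [hT v]; exact Finset.sum_nonneg fun e _ => sq_nonneg _
  have hgsum : ∑ v : V, g v = 2 * ∑ v : V, T v - 2 * T c := by
    have hsplit : ∀ v : V, g v + (if v = c then 2 * T v else 0) = 2 * T v := by
      intro v; rw [hg v]; by_cases hv : v = c <;> simp [hv]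
    have hsum2 : ∑ v : V, (g v + (if v = c then 2 * T v else 0)) = ∑ v : V, 2 * T v :=
      Finset.sum_congr rfl fun v _ => hsplit v
    rw [Finset.sum_add_distrib, Finset.sum_ite_eq' Finset.univ c (fun v => 2 * T v)] at hsum2
    simp only [Finset.mem_univ, if_pos] at hsum2
    rw [Finset.mul_sum]
    linarith
  have hsum_le : ∑ v : V, (S v) ^ 2 ≤ ∑ v : V, g v := Finset.sum_le_sum fun v _ => hpw v
  by_contra hcon
  push_neg at hcon
  have hq := quad_id (G := G) x
  simp only [← hS] at hq
  have hge : 4 * ∑ e : G.edgeSet, (x e) ^ 2 ≤ ∑ v : V, (S v) ^ 2 := by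
    rw [hq, ← hxx]; linarith
  have hTc0 : T c = 0 := by
    have := hTnonneg c
    linarith [hgsum, h2T, hsum_le, hge]
  have hpe : ∀ v : V, (S v) ^ 2 = g v := by
    by_contra hh
    push_neg at hh
    obtain ⟨v0, hv0⟩ := hh
    have hlt : ∑ v : V, (S v) ^ 2 < ∑ v : V, g v :=
      Finset.sum_lt_sum (fun v _ => hpw v) ⟨v0, Finset.mem_univ v0, lt_of_le_of_ne (hpw v0) hv0⟩
    linarith [hgsum, h2T, hge]
  have hx0 : ∀ e : G.edgeSet, x e = 0 := by
    refine my_zero_of_conditions ht c hdeg x ?_ ?_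
    · intro v hv e hee hc1
      have heq := hpe v
      rw [hg v, if_neg hv, hS v, hT v] at heq
      exact (my_vertex_eqs x (myInc G v) (hcardle v hv) heq).1 e hee hc1
    · intro v hv e hee f hf hef
      have heq := hpe v
      rw [hg v, if_neg hv, hS v, hT v] at heq
      exact (my_vertex_eqs x (myInc G v) (hcardle v hv) heq).2 e hee f hf hef
  exact hx (funext hx0)
end Main

/-- If `G` is a starlike tree (a tree with exactly one vertex of degree greater than 2),
then the second largest adjacency eigenvalue of its line graph is strictly less than `2`;
equivalently, at most one adjacency eigenvalue of `L(G)` (with multiplicity) is `≥ 2`. -/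
theorem lineGraph_starlikeTree_second_eigenvalue_lt_two
    {V : Type*} [Fintype V] [DecidableEq V] (G : SimpleGraph V) [DecidableRel G.Adj]
    (htree : G.IsTree) (hstar : ∃! v : V, 2 < G.degree v) :
    (((G.lineGraph.adjMatrix ℝ).charpoly.roots).filter (fun μ => 2 ≤ μ)).card ≤ 1 := by
  obtain ⟨c, hc, huniq⟩ := hstar
  have hdeg : ∀ v : V, v ≠ c → G.degree v ≤ 2 := by
    intro v hv
    by_contra hdv
    push_neg at hdv
    exact hv (huniq v hdv)
  have hherm : (G.lineGraph.adjMatrix ℝ).IsHermitian := by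
    have ht2 : (G.lineGraph.adjMatrix ℝ)ᴴ = (G.lineGraph.adjMatrix ℝ)ᵀ := by
      refine Matrix.ext fun i j => ?_
      simp [Matrix.conjTranspose_apply, Matrix.transpose_apply]
    rw [Matrix.IsHermitian, ht2, SimpleGraph.transpose_adjMatrix]
  set φ : (G.edgeSet → ℝ) →ₗ[ℝ] ℝ :=
    { toFun := fun x => ∑ e ∈ myInc G c, x e
      map_add' := fun x y => Finset.sum_add_distrib
      map_smul' := fun r x => by simp [Finset.mul_sum] } with hφdef
  apply keyLA _ hherm φ
  intro x hx0 hxne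
  exact my_main_strict htree c hdeg x hx0 hxne
end

section
/- Let G be a starlike tree T(l_1,…,l_Δ) and v its center vertex of degree Δ. Then the second largest signless Laplacian eigenvalue of G is strictly less than 4. -/
open Polynomial Matrix

set_option linter.unusedSectionVars false

/-- The signless Laplacian `Q(G) = D(G) + A(G)` of a graph. -/
def signlessLaplacian {V : Type*} (G : SimpleGraph V) [Fintype V] [DecidableEq V]
    [DecidableRel G.Adj] : Matrix V V ℝ :=
  Matrix.diagonal (fun v => (G.degree v : ℝ)) + G.adjMatrix ℝ

section Aux

variable {V : Type*} [Fintype V] [DecidableEq V] (G : SimpleGraph V) [DecidableRel G.Adj]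

lemma adjMatrix_row_sum (i : V) : ∑ u, (G.adjMatrix ℝ) i u = (G.degree i : ℝ) := by
  simp [SimpleGraph.adjMatrix_apply, Finset.sum_ite, SimpleGraph.degree,
    SimpleGraph.neighborFinset_eq_filter]

/-- Along a walk whose endpoint values differ, some edge has differing values. -/
lemma exists_adj_ne_of_walk (x : V → ℝ) :
    ∀ {a b : V}, G.Walk a b → x a ≠ x b → ∃ c d, G.Adj c d ∧ x c ≠ x d := by
  intro a b p
  induction p with
  | nil => intro h; exact absurd rfl h
  | @cons a c b h p ih =>
    intro hne
    by_cases hac : x a = x c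
    · exact ih (hac ▸ hne)
    · exact ⟨a, c, h, hac⟩

/-- Key quadratic form bound: on the hyperplane `x v = 0`, the signless Laplacian quadratic
form is strictly below `4‖x‖²`, if `G` is connected and degrees off `v` are at most 2. -/
lemma quadform_lt (hc : G.Connected) (v : V) (hother : ∀ w : V, w ≠ v → G.degree w ≤ 2)
    (x : V → ℝ) (hxv : x v = 0) (hx : x ≠ 0) :
    x ⬝ᵥ ((signlessLaplacian G) *ᵥ x) < 4 * (x ⬝ᵥ x) := by
  classical
  set A := G.adjMatrix ℝ with hA
  set d : V → ℝ := fun i => (G.degree i : ℝ) with hd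
  -- an edge with differing values
  obtain ⟨w, hw⟩ : ∃ w, x w ≠ 0 := by
    by_contra h
    push_neg at h
    exact hx (funext fun i => h i)
  obtain ⟨c, e, hce, hne⟩ :=
    exists_adj_ne_of_walk G x ((hc.preconnected v w).some) (by rw [hxv]; exact (Ne.symm hw))
  -- expand the quadratic form
  have hexp : x ⬝ᵥ ((signlessLaplacian G) *ᵥ x)
      = (∑ i, d i * x i ^ 2) + ∑ i, ∑ u, A i u * (x i * x u) := by
    simp only [signlessLaplacian, Matrix.add_mulVec, dotProduct_add, ← hA, ← hd]
    congr 1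
    · simp only [dotProduct, Matrix.mulVec_diagonal]
      exact Finset.sum_congr rfl fun i _ => by ring
    · simp only [dotProduct, Matrix.mulVec, Finset.mul_sum]
      exact Finset.sum_congr rfl fun i _ => Finset.sum_congr rfl fun u _ => by ring
  -- S < T
  have hrow : ∀ i, ∑ u, A i u = d i := fun i => adjMatrix_row_sum G i
  have hsym : ∀ i u, A i u = A u i := by
    intro i u; simp [hA, SimpleGraph.adjMatrix_apply, G.adj_comm]
  have hS : (∑ i, ∑ u, A i u * (x i * x u)) < ∑ i, d i * x i ^ 2 := by
    have hAnn : ∀ i u, (0:ℝ) ≤ A i u := by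
      intro i u; simp [hA, SimpleGraph.adjMatrix_apply]; split <;> norm_num
    have step : (∑ i, ∑ u, A i u * (x i * x u))
        < ∑ i, ∑ u, A i u * ((x i ^ 2 + x u ^ 2) / 2) := by
      refine Finset.sum_lt_sum (fun i _ => Finset.sum_le_sum fun u _ =>
        mul_le_mul_of_nonneg_left (by nlinarith [sq_nonneg (x i - x u)]) (hAnn i u)) ?_
      refine ⟨c, Finset.mem_univ c, Finset.sum_lt_sum (fun u _ =>
        mul_le_mul_of_nonneg_left (by nlinarith [sq_nonneg (x c - x u)]) (hAnn c u)) ?_⟩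
      refine ⟨e, Finset.mem_univ e, ?_⟩
      have hAce : A c e = 1 := by simp [hA, SimpleGraph.adjMatrix_apply, hce]
      rw [hAce]
      have hsub : x c - x e ≠ 0 := sub_ne_zero.mpr hne
      have hpos : 0 < (x c - x e) ^ 2 := by positivity
      nlinarith [hpos]
    have heq : (∑ i, ∑ u, A i u * ((x i ^ 2 + x u ^ 2) / 2)) = ∑ i, d i * x i ^ 2 := by
      have h1 : (∑ i, ∑ u, A i u * (x i ^ 2 / 2)) = ∑ i, d i * (x i ^ 2 / 2) := by
        refine Finset.sum_congr rfl fun i _ => ?_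
        rw [← Finset.sum_mul, hrow]
      have h2 : (∑ i, ∑ u, A i u * (x u ^ 2 / 2)) = ∑ i, d i * (x i ^ 2 / 2) := by
        rw [Finset.sum_comm]
        refine Finset.sum_congr rfl fun u _ => ?_
        calc (∑ i, A i u * (x u ^ 2 / 2)) = (∑ i, A u i) * (x u ^ 2 / 2) := by
              rw [Finset.sum_mul]; exact Finset.sum_congr rfl fun i _ => by rw [hsym i u]
          _ = d u * (x u ^ 2 / 2) := by rw [hrow]
      calc (∑ i, ∑ u, A i u * ((x i ^ 2 + x u ^ 2) / 2))
          = (∑ i, ∑ u, A i u * (x i ^ 2 / 2)) + ∑ i, ∑ u, A i u * (x u ^ 2 / 2) := by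
            rw [← Finset.sum_add_distrib]
            refine Finset.sum_congr rfl fun i _ => ?_
            rw [← Finset.sum_add_distrib]
            exact Finset.sum_congr rfl fun u _ => by ring
        _ = ∑ i, d i * x i ^ 2 := by rw [h1, h2, ← Finset.sum_add_distrib]
                                     exact Finset.sum_congr rfl fun i _ => by ring
    exact step.trans_eq heq
  -- T ≤ 2 ∑ x²
  have hT : (∑ i, d i * x i ^ 2) ≤ 2 * ∑ i, x i ^ 2 := by
    rw [Finset.mul_sum]
    refine Finset.sum_le_sum fun i _ => ?_
    by_cases hiv : i = v
    · subst hiv; simp [hxv]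
    · have h2 : d i ≤ 2 := by
        have := hother i hiv
        simpa [hd] using (by exact_mod_cast this : (G.degree i : ℝ) ≤ 2)
      nlinarith [sq_nonneg (x i)]
  have hdot : x ⬝ᵥ x = ∑ i, x i ^ 2 := by
    simp [dotProduct, sq]
  rw [hexp, hdot]
  nlinarith
lemma signlessLaplacian_isHermitian : (signlessLaplacian G).IsHermitian := by
  unfold Matrix.IsHermitian
  ext i j
  by_cases h : i = j
  · subst h; simp [signlessLaplacian]
  · simp [signlessLaplacian, Matrix.conjTranspose_apply, Matrix.diagonal_apply_ne, h,
      Ne.symm h, G.adj_comm]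

end Aux

/-- The characteristic polynomial of a real symmetric matrix is the product of linear
factors given by its eigenvalues. -/
lemma IsHermitian.charpoly_eq_prod {n : Type*} [Fintype n] [DecidableEq n]
    {M : Matrix n n ℝ} (hM : M.IsHermitian) :
    M.charpoly = ∏ i, (X - C (hM.eigenvalues i)) := by
  classical
  set U : Matrix n n ℝ := (Matrix.IsHermitian.eigenvectorUnitary hM : Matrix n n ℝ) with hUdef
  have hUmem : U ∈ Matrix.unitaryGroup n ℝ := (Matrix.IsHermitian.eigenvectorUnitary hM).2
  have hUsU : U * star U = 1 := Unitary.mul_star_self_of_mem hUmem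
  set D : Matrix n n ℝ := Matrix.diagonal (RCLike.ofReal ∘ hM.eigenvalues) with hDdef
  have hsp : M = U * D * star U := hM.spectral_theorem
  -- charpoly is invariant under the unitary conjugation
  have hmul1 : U.map C * (star U).map C = (1 : Matrix n n ℝ[X]) := by
    rw [← Matrix.map_mul, hUsU, Matrix.map_one C (map_zero C) (map_one C)]
  have hscal : U.map C * (Matrix.scalar n (X : ℝ[X])) * (star U).map C
      = Matrix.scalar n (X : ℝ[X]) := by
    calc U.map C * Matrix.scalar n (X : ℝ[X]) * (star U).map C
        = Matrix.scalar n (X : ℝ[X]) * U.map C * (star U).map C := by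
          rw [(Matrix.scalar_commute (X : ℝ[X]) (fun r' => Commute.all _ _) (U.map C)).eq]
      _ = Matrix.scalar n (X : ℝ[X]) * (U.map C * (star U).map C) := by rw [Matrix.mul_assoc]
      _ = Matrix.scalar n (X : ℝ[X]) := by rw [hmul1, Matrix.mul_one]
  have hcm : Matrix.charmatrix M = U.map C * Matrix.charmatrix D * (star U).map C := by
    unfold Matrix.charmatrix
    simp only [RingHom.mapMatrix_apply]
    rw [Matrix.mul_sub, Matrix.sub_mul, hscal]
    congr 1
    rw [hsp, Matrix.map_mul, Matrix.map_mul, Matrix.mul_assoc]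
  have hdet : M.charpoly = D.charpoly := by
    unfold Matrix.charpoly
    rw [hcm, Matrix.det_mul, Matrix.det_mul]
    have : (U.map C).det * ((star U).map C).det = 1 := by
      rw [← Matrix.det_mul, ← Matrix.map_mul, hUsU, Matrix.map_one C (map_zero C) (map_one C),
        Matrix.det_one]
    calc (U.map C).det * (Matrix.charmatrix D).det * ((star U).map C).det
        = (U.map C).det * ((star U).map C).det * (Matrix.charmatrix D).det := by ring
      _ = (Matrix.charmatrix D).det := by rw [this, one_mul]
  rw [hdet]
  have hcd : Matrix.charmatrix D = Matrix.diagonal (fun i => (X : ℝ[X]) - C (hM.eigenvalues i)) := by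
    ext i j
    by_cases hij : i = j
    · subst hij
      simp [Matrix.charmatrix_apply_eq, hDdef, Matrix.diagonal_apply_eq]
    · simp [Matrix.charmatrix_apply_ne _ _ _ hij, hDdef, Matrix.diagonal_apply_ne _ hij]
  unfold Matrix.charpoly
  rw [hcd, Matrix.det_diagonal]

/-- The multiset of roots of the characteristic polynomial of a real symmetric matrix is the
multiset of its eigenvalues. -/
lemma IsHermitian.roots_charpoly {n : Type*} [Fintype n] [DecidableEq n]
    {M : Matrix n n ℝ} (hM : M.IsHermitian) :
    M.charpoly.roots = Finset.univ.val.map hM.eigenvalues := by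
  rw [IsHermitian.charpoly_eq_prod hM]
  rw [Finset.prod_eq_multiset_prod]
  rw [show Finset.univ.val.map (fun i => (X : ℝ[X]) - C (hM.eigenvalues i))
      = (Finset.univ.val.map hM.eigenvalues).map (fun a => (X : ℝ[X]) - C a) by
    rw [Multiset.map_map]; rfl]
  exact Polynomial.roots_multiset_prod_X_sub_C _

lemma dot_comb {V : Type*} [Fintype V] (u w : V → ℝ) (a b c1 c2 : ℝ) :
    (fun k => a * u k + b * w k) ⬝ᵥ (fun k => c1 * u k + c2 * w k)
      = a*c1*(u ⬝ᵥ u) + a*c2*(u ⬝ᵥ w) + b*c1*(w ⬝ᵥ u) + b*c2*(w ⬝ᵥ w) := by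
  simp only [dotProduct, Finset.mul_sum, ← Finset.sum_add_distrib]
  exact Finset.sum_congr rfl fun k _ => by ring

/-- If `G` is a starlike tree with center `v` (the unique vertex, of degree `Δ ≥ 3`, all
other vertices having degree at most 2), then the second largest signless Laplacian
eigenvalue of `G` is strictly less than `4`; equivalently, at most one signless Laplacian
eigenvalue (with multiplicity) is `≥ 4`. -/
theorem starlikeTree_second_signlessLaplacian_eigenvalue_lt_four
    {V : Type*} [Fintype V] [DecidableEq V] (G : SimpleGraph V) [DecidableRel G.Adj]
    (htree : G.IsTree) (v : V) (Δ : ℕ) (hΔ : G.degree v = Δ) (hΔ3 : 3 ≤ Δ)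
    (hother : ∀ w : V, w ≠ v → G.degree w ≤ 2) :
    (((signlessLaplacian G).charpoly.roots).filter (fun μ => 4 ≤ μ)).card ≤ 1 := by
  classical
  have hA := signlessLaplacian_isHermitian G
  rw [IsHermitian.roots_charpoly hA]
  by_contra hcard
  push_neg at hcard
  have hcard' : 1 < (Finset.univ.filter (fun i => (4:ℝ) ≤ hA.eigenvalues i)).card := by
    have heq : ((Finset.univ.val.map hA.eigenvalues).filter (fun μ => (4:ℝ) ≤ μ)).card
        = (Finset.univ.filter (fun i => (4:ℝ) ≤ hA.eigenvalues i)).card := by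
      rw [← Multiset.countP_eq_card_filter, Multiset.countP_map,
        Finset.card_def, Finset.filter_val]
    rw [← heq]
    exact hcard
  obtain ⟨i, hi, j, hj, hij⟩ := Finset.one_lt_card.mp hcard'
  rw [Finset.mem_filter] at hi hj
  have hli : (4:ℝ) ≤ hA.eigenvalues i := hi.2
  have hlj : (4:ℝ) ≤ hA.eigenvalues j := hj.2
  set u : V → ℝ := ⇑(hA.eigenvectorBasis i) with hu
  set w : V → ℝ := ⇑(hA.eigenvectorBasis j) with hw
  -- orthonormality
  have horth := hA.eigenvectorBasis.orthonormal
  rw [orthonormal_iff_ite] at horth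
  have hdotkl : ∀ k l, (⇑(hA.eigenvectorBasis k) : V → ℝ) ⬝ᵥ ⇑(hA.eigenvectorBasis l)
      = if k = l then (1:ℝ) else 0 := by
    intro k l
    have h := horth k l
    rw [PiLp.inner_apply] at h
    simpa [dotProduct, mul_comm] using h
  have huu : u ⬝ᵥ u = 1 := by rw [hu, hdotkl]; simp
  have hww : w ⬝ᵥ w = 1 := by rw [hw, hdotkl]; simp
  have huw : u ⬝ᵥ w = 0 := by rw [hu, hw, hdotkl]; simp [hij]
  have hwu : w ⬝ᵥ u = 0 := by rw [hu, hw, hdotkl]; simp [Ne.symm hij]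
  -- choose coefficients killing coordinate v
  obtain ⟨a, b, hab, habv⟩ : ∃ a b : ℝ, ¬(a = 0 ∧ b = 0) ∧ a * u v + b * w v = 0 := by
    by_cases h : u v = 0
    · exact ⟨1, 0, by simp, by simp [h]⟩
    · exact ⟨w v, -(u v), fun hc => h (by simpa using hc.2), by ring⟩
  set x : V → ℝ := fun k => a * u k + b * w k with hx
  have hxv : x v = 0 := habv
  have hdotxx : x ⬝ᵥ x = a^2 + b^2 := by
    rw [hx, dot_comb u w a b a b, huu, hww, huw, hwu]; ring
  have hQx : (signlessLaplacian G) *ᵥ x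
      = fun k => (a * hA.eigenvalues i) * u k + (b * hA.eigenvalues j) * w k := by
    have hxs : x = a • u + b • w := by funext k; simp [hx]
    rw [hxs, Matrix.mulVec_add, Matrix.mulVec_smul, Matrix.mulVec_smul, hu, hw,
      hA.mulVec_eigenvectorBasis i, hA.mulVec_eigenvectorBasis j]
    funext k
    simp [smul_eq_mul]
    ring
  have hquad : x ⬝ᵥ ((signlessLaplacian G) *ᵥ x)
      = a^2 * hA.eigenvalues i + b^2 * hA.eigenvalues j := by
    rw [hQx, hx, dot_comb u w a b (a * hA.eigenvalues i) (b * hA.eigenvalues j),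
      huu, hww, huw, hwu]
    ring
  have hab2 : 0 < a^2 + b^2 := by
    rcases not_and_or.mp hab with h | h
    · have : 0 < a^2 := by positivity
      nlinarith [sq_nonneg b]
    · have : 0 < b^2 := by positivity
      nlinarith [sq_nonneg a]
  have hxne : x ≠ 0 := by
    intro h0
    rw [h0] at hdotxx
    simp [dotProduct] at hdotxx
    nlinarith
  have hlt := quadform_lt G htree.isConnected v hother x hxv hxne
  rw [hquad, hdotxx] at hlt
  nlinarith
end
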